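/- Let V be a multi vector space over a finite-dimensional vector space X with distinct nonzero-vector count values n₀ > n₁ > ... > n_k attained on X \ {0}, and corresponding level subspaces V_{n_i} = {x : C_V(x) ≥ n_i}. If B is a basis of X such that B ∩ V_{n_i} spans V_{n_i} (hence is a basis of V_{n_i}) for every i, then B is multi linearly independent in V: for any finitely many distinct elements x₁,...,x_r of B and nonzero scalars a₁,...,a_r, C_V(∑ a_i x_i) = min_i C_V(a_i x_i). -/

import Mathlib

/-- if a basis `b` of `X` meets each level subspace `V i` in a spanning
set, then `b` is multi linearly independent in `V`. -/
theorem mvs_basis_spanning_levels_multiIndep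
    {K X ι : Type*} [Field K] [AddCommGroup X] [Module K X] [FiniteDimensional K X]
    (C : X → ℕ)
    (hadd : ∀ x y : X, min (C x) (C y) ≤ C (x + y))
    (hsmul : ∀ (a : K) (x : X), C x ≤ C (a • x))
    (k : ℕ) (n : Fin (k + 1) → ℕ) (hanti : StrictAnti n)
    (hvals : ∀ x : X, x ≠ 0 → ∃ i, C x = n i)
    (hattained : ∀ i, ∃ x : X, x ≠ 0 ∧ C x = n i)
    (V : Fin (k + 1) → Submodule K X)
    (hV : ∀ i, (V i : Set X) = {x : X | n i ≤ C x})
    (b : Module.Basis ι K X)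
    (hspan : ∀ i, Submodule.span K (Set.range ⇑b ∩ (V i : Set X)) = V i) :
    ∀ (s : Finset ι) (hs : s.Nonempty) (a : ι → K), (∀ i ∈ s, a i ≠ 0) →
      C (∑ i ∈ s, a i • b i) = s.inf' hs (fun i => C (a i • b i)) := by
  -- C is invariant under nonzero scaling
  have hCsmul : ∀ (c : K) (x : X), c ≠ 0 → C (c • x) = C x := by
    intro c x hc
    refine le_antisymm ?_ (hsmul c x)
    have := hsmul c⁻¹ (c • x)
    rwa [smul_smul, inv_mul_cancel₀ hc, one_smul] at this
  intro s hs a ha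
  refine le_antisymm ?_ ?_
  · -- x ≠ 0, so C x = n j for some j; x ∈ V j; use span hypothesis
    set x := ∑ i ∈ s, a i • b i with hx
    have hrepr : ∀ i ∈ s, b.repr x i = a i := by
      intro i hi
      rw [hx]
      simp only [map_sum, map_smul, Module.Basis.repr_self, Finsupp.coe_finset_sum,
        Finset.sum_apply, Finsupp.smul_apply]
      rw [Finset.sum_eq_single i]
      · simp
      · intro j hj hji
        simp [Finsupp.single_apply, hji]
      · intro h; exact absurd hi h
    have hx0 : x ≠ 0 := by
      intro h0
      obtain ⟨i, hi⟩ := hs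
      have := hrepr i hi
      rw [h0] at this
      simp at this
      exact ha i hi this.symm
    obtain ⟨j, hj⟩ := hvals x hx0
    have hxV : x ∈ V j := by
      rw [← SetLike.mem_coe, hV j]
      exact le_of_eq hj.symm
    -- b i ∈ V j for each i ∈ s
    have hbi : ∀ i ∈ s, b i ∈ V j := by
      intro i hi
      rw [← hspan j] at hxV
      have hset : Set.range ⇑b ∩ (V j : Set X) = ⇑b '' (⇑b ⁻¹' (V j : Set X)) := by
        rw [Set.image_preimage_eq_inter_range, Set.inter_comm]
      rw [hset] at hxV
      have := (b.mem_span_image.mp hxV)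
      have hmem : i ∈ (b.repr x).support := by
        rw [Finsupp.mem_support_iff, hrepr i hi]
        exact ha i hi
      exact this hmem
    apply Finset.le_inf'
    intro i hi
    rw [hCsmul (a i) (b i) (ha i hi), hj]
    have := hbi i hi
    rw [← SetLike.mem_coe, hV j] at this
    exact this
  · -- subadditivity direction by induction
    clear ha
    induction hs using Finset.Nonempty.cons_induction with
    | singleton i => simp
    | cons i t hit ht ih =>
      rw [Finset.sum_cons, Finset.inf'_cons ht]
      have h1 := hadd (a i • b i) (∑ j ∈ t, a j • b j)
      exact le_trans (min_le_min le_rfl ih) h1
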